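/- If A and B are distinct subsets of [n] with |A| + |B| even, then the set C_n ∩ H_A^- ∩ H_B^- is contained in the hyperplane {x : ∑_{i∉A} x_i − ∑_{i∈A} x_i = 1 − |A|}; in particular it has Lebesgue measure zero in ℝ^n. -/
import Mathlib

open MeasureTheory Finset

/-- If `A ≠ B ⊆ [n]` with `|A| + |B|` even, then `C_n ∩ H_A^- ∩ H_B^-` is contained in
the hyperplane `H_A`; in particular it has Lebesgue measure zero. -/
theorem stmt1 (n : ℕ) (A B : Finset (Fin n)) (hAB : A ≠ B)
    (hpar : Even (A.card + B.card)) :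
    {x : Fin n → ℝ | (∀ i, 0 ≤ x i ∧ x i ≤ 1) ∧
        ∑ i ∈ Aᶜ, x i - ∑ i ∈ A, x i ≤ 1 - (A.card : ℝ) ∧
        ∑ i ∈ Bᶜ, x i - ∑ i ∈ B, x i ≤ 1 - (B.card : ℝ)} ⊆
      {x : Fin n → ℝ | ∑ i ∈ Aᶜ, x i - ∑ i ∈ A, x i = 1 - (A.card : ℝ)} ∧
    volume {x : Fin n → ℝ | (∀ i, 0 ≤ x i ∧ x i ≤ 1) ∧
        ∑ i ∈ Aᶜ, x i - ∑ i ∈ A, x i ≤ 1 - (A.card : ℝ) ∧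
        ∑ i ∈ Bᶜ, x i - ∑ i ∈ B, x i ≤ 1 - (B.card : ℝ)} = 0 := by
  -- the symmetric difference is nonempty and has even cardinality, hence card ≥ 2
  have hd2 : 2 ≤ (A \ B).card + (B \ A).card := by
    have hpar' : Even ((A \ B).card + (B \ A).card) := by
      have h1 : A.card = (A \ B).card + (A ∩ B).card := by
        rw [Finset.card_sdiff_add_card_inter]
      have h2 : B.card = (B \ A).card + (B ∩ A).card := by
        rw [Finset.card_sdiff_add_card_inter]
      have h3 : (A ∩ B).card = (B ∩ A).card := by rw [Finset.inter_comm]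
      rcases hpar with ⟨k, hk⟩
      refine ⟨k - (A ∩ B).card, ?_⟩
      omega
    have hne : (A \ B).card + (B \ A).card ≠ 0 := by
      intro h
      have h1 : A \ B = ∅ := Finset.card_eq_zero.mp (by omega)
      have h2 : B \ A = ∅ := Finset.card_eq_zero.mp (by omega)
      exact hAB (Finset.Subset.antisymm
        (Finset.sdiff_eq_empty_iff_subset.mp h1) (Finset.sdiff_eq_empty_iff_subset.mp h2))
    rcases hpar' with ⟨k, hk⟩
    omega
  -- the containment
  have hsub : {x : Fin n → ℝ | (∀ i, 0 ≤ x i ∧ x i ≤ 1) ∧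
        ∑ i ∈ Aᶜ, x i - ∑ i ∈ A, x i ≤ 1 - (A.card : ℝ) ∧
        ∑ i ∈ Bᶜ, x i - ∑ i ∈ B, x i ≤ 1 - (B.card : ℝ)} ⊆
      {x : Fin n → ℝ | ∑ i ∈ Aᶜ, x i - ∑ i ∈ A, x i = 1 - (A.card : ℝ)} := by
    rintro x ⟨h01, hA, hB⟩
    simp only [Set.mem_setOf_eq]
    -- rewrite F_S + |S| = ∑_{Sᶜ} x + ∑_{S} (1-x)
    have key : ∀ S : Finset (Fin n),
        ∑ i ∈ Sᶜ, x i - ∑ i ∈ S, x i + (S.card : ℝ)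
          = ∑ i ∈ Sᶜ, x i + ∑ i ∈ S, (1 - x i) := by
      intro S
      rw [Finset.sum_sub_distrib, Finset.sum_const, nsmul_eq_mul, mul_one]
      ring
    -- lower bounds
    have hsubAB : A \ B ⊆ Bᶜ := fun i hi => by
      simp only [Finset.mem_compl]; exact (Finset.mem_sdiff.mp hi).2
    have hsubBA : B \ A ⊆ Aᶜ := fun i hi => by
      simp only [Finset.mem_compl]; exact (Finset.mem_sdiff.mp hi).2
    have l1 : (∑ i ∈ B \ A, x i : ℝ) ≤ ∑ i ∈ Aᶜ, x i :=
      Finset.sum_le_sum_of_subset_of_nonneg hsubBA (fun i _ _ => (h01 i).1)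
    have l2 : (∑ i ∈ A \ B, (1 - x i) : ℝ) ≤ ∑ i ∈ A, (1 - x i) :=
      Finset.sum_le_sum_of_subset_of_nonneg (Finset.sdiff_subset)
        (fun i _ _ => by linarith [(h01 i).2])
    have l3 : (∑ i ∈ A \ B, x i : ℝ) ≤ ∑ i ∈ Bᶜ, x i :=
      Finset.sum_le_sum_of_subset_of_nonneg hsubAB (fun i _ _ => (h01 i).1)
    have l4 : (∑ i ∈ B \ A, (1 - x i) : ℝ) ≤ ∑ i ∈ B, (1 - x i) :=
      Finset.sum_le_sum_of_subset_of_nonneg (Finset.sdiff_subset)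
        (fun i _ _ => by linarith [(h01 i).2])
    have hsum1 : (∑ i ∈ A \ B, x i) + (∑ i ∈ A \ B, (1 - x i)) = ((A \ B).card : ℝ) := by
      rw [← Finset.sum_add_distrib]
      simp
    have hsum2 : (∑ i ∈ B \ A, x i) + (∑ i ∈ B \ A, (1 - x i)) = ((B \ A).card : ℝ) := by
      rw [← Finset.sum_add_distrib]
      simp
    have keyA := key A
    have keyB := key B
    have hd2' : (2 : ℝ) ≤ ((A \ B).card : ℝ) + ((B \ A).card : ℝ) := by
      exact_mod_cast hd2
    linarith
  refine ⟨hsub, ?_⟩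
  -- measure zero part: the hyperplane is a proper affine subspace
  obtain ⟨i₀, hi₀⟩ : ((A \ B) ∪ (B \ A)).Nonempty := by
    rw [← Finset.card_pos, Finset.card_union_of_disjoint disjoint_sdiff_sdiff]
    omega
  set L : (Fin n → ℝ) →ₗ[ℝ] ℝ :=
    (∑ i ∈ Aᶜ, LinearMap.proj i) - (∑ i ∈ A, LinearMap.proj i) with hL
  have hLval : ∀ x : Fin n → ℝ, L x = ∑ i ∈ Aᶜ, x i - ∑ i ∈ A, x i := by
    intro x
    simp [hL, LinearMap.sum_apply, LinearMap.proj_apply]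
  set c : ℝ := 1 - (A.card : ℝ) with hc
  set S : AffineSubspace ℝ (Fin n → ℝ) :=
    AffineSubspace.comap L.toAffineMap (AffineSubspace.mk' c (⊥ : Submodule ℝ ℝ)) with hS
  have hmemS : ∀ x : Fin n → ℝ, x ∈ S ↔ L x = c := by
    intro x
    simp [hS, AffineSubspace.mem_comap, AffineSubspace.mem_mk', sub_eq_zero]
  have hLeval : ∀ s : Finset (Fin n),
      ∑ i ∈ s, Pi.single i₀ (1:ℝ) i = if i₀ ∈ s then 1 else 0 := by
    intro s
    split_ifs with h
    · rw [Finset.sum_eq_single_of_mem i₀ h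
        (fun b _ hb => Pi.single_eq_of_ne hb 1), Pi.single_eq_same]
    · exact Finset.sum_eq_zero fun b hb => Pi.single_eq_of_ne (fun (he : b = i₀) => h (he ▸ hb)) 1
  have hLne : L (Pi.single i₀ 1) = 1 ∨ L (Pi.single i₀ 1) = -1 := by
    rw [hLval, hLeval, hLeval]
    by_cases h : i₀ ∈ A <;> simp [h]
  have hSne : S ≠ ⊤ := by
    intro htop
    have h0 : (0 : Fin n → ℝ) ∈ S := htop ▸ AffineSubspace.mem_top ℝ _ _
    have hv : Pi.single i₀ (1:ℝ) ∈ S := htop ▸ AffineSubspace.mem_top ℝ _ _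
    rw [hmemS] at h0 hv
    rw [map_zero] at h0
    rcases hLne with h | h <;> rw [h] at hv <;> rw [← h0] at hv <;> norm_num at hv
  have hzero : volume (S : Set (Fin n → ℝ)) = 0 :=
    Measure.addHaar_affineSubspace volume S hSne
  refine measure_mono_null ?_ hzero
  refine hsub.trans ?_
  intro x hx
  rw [SetLike.mem_coe, hmemS, hLval]
  exact hx
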